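/- For all real x with 0 < x < 1, (log x)² ≤ ((x²−1)/2 − log x) · (1 + g(x)), where g(x) = Σ_{k≥1} (Σ_{ℓ=1}^{k+1} 1/(ℓ(k+2−ℓ)) − 1/(k+2)) (1 − x)^k. -/

import Mathlib

open Real Finset

theorem stmt12 (x : ℝ) (hx0 : 0 < x) (hx1 : x < 1) :
    (Real.log x) ^ 2 ≤
      ((x ^ 2 - 1) / 2 - Real.log x) *
        (1 + ∑' k : ℕ,
          ((∑ l ∈ Finset.Icc 1 (k + 2), (1 : ℝ) / ((l : ℝ) * ((k + 3 - l : ℕ) : ℝ))) -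
              1 / ((k : ℝ) + 3)) * (1 - x) ^ (k + 1)) := by
  set t : ℝ := 1 - x with ht_def
  have ht0 : 0 < t := by simp [ht_def]; linarith
  have ht1 : t < 1 := by simp [ht_def]; linarith
  have htabs : |t| < 1 := by rw [abs_of_pos ht0]; exact ht1
  have hx : (1 : ℝ) - t = x := by ring
  -- power series of -log x
  have hb : HasSum (fun n : ℕ => t ^ (n + 1) / (n + 1)) (-Real.log x) := by
    simpa [hx] using Real.hasSum_pow_div_log_of_abs_lt_one htabs
  -- shifted version a with a 0 = 0
  set a : ℕ → ℝ := fun n => if n = 0 then 0 else t ^ n / n with ha_def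
  have ha : HasSum a (-Real.log x) := by
    have : HasSum (fun n : ℕ => a (n + 1)) (-Real.log x) := by
      simpa [ha_def] using hb
    have h2 := (hasSum_nat_add_iff (f := a) 1).mp this
    simpa [ha_def] using h2
  have hanorm : Summable fun n => ‖a n‖ := by
    apply Summable.of_nonneg_of_le (fun n => norm_nonneg _) _
      (summable_geometric_of_lt_one ht0.le ht1)
    intro n
    rcases Nat.eq_zero_or_pos n with rfl | hn
    · simp [ha_def]
    · simp only [ha_def, if_neg hn.ne']
      rw [Real.norm_eq_abs, abs_div, abs_of_pos (pow_pos ht0 n), Nat.abs_cast]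
      calc t ^ n / (n : ℝ) ≤ t ^ n / 1 := by
            apply div_le_div_of_nonneg_left (pow_pos ht0 n).le one_pos
            exact_mod_cast hn
        _ = t ^ n := by ring
  set d : ℕ → ℝ := fun n => ∑ kl ∈ Finset.HasAntidiagonal.antidiagonal n, a kl.1 * a kl.2 with hd_def
  have hd_summable : Summable d :=
    summable_sum_mul_antidiagonal_of_summable_norm' hanorm ha.summable hanorm ha.summable
  have hd : HasSum d ((Real.log x) ^ 2) := by
    have := tsum_mul_tsum_eq_tsum_sum_antidiagonal_of_summable_norm hanorm hanorm
    rw [ha.tsum_eq] at this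
    have h2 : d = fun n => ∑ kl ∈ Finset.HasAntidiagonal.antidiagonal n, a kl.1 * a kl.2 := hd_def
    rw [hd_summable.hasSum_iff, ← this]
    ring
  -- compute d (k+3)
  have hd3 : ∀ k : ℕ, d (k + 3) =
      (∑ l ∈ Finset.Icc 1 (k + 2), (1 : ℝ) / ((l : ℝ) * ((k + 3 - l : ℕ) : ℝ))) * t ^ (k + 3) := by
    intro k
    simp only [hd_def]
    rw [Finset.Nat.sum_antidiagonal_eq_sum_range_succ_mk]
    rw [Finset.sum_mul]
    rw [← Finset.sum_subset (s₁ := Finset.Icc 1 (k + 2)) (f := fun p => a p * a (k + 3 - p))]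
    · apply Finset.sum_congr rfl
      intro p hp
      simp only [Finset.mem_Icc] at hp
      obtain ⟨hp1, hp2⟩ := hp
      have hne1 : p ≠ 0 := by omega
      have hne2 : k + 3 - p ≠ 0 := by omega
      simp only [ha_def, if_neg hne1, if_neg hne2]
      rw [div_mul_div_comm, ← pow_add]
      have hpq : p + (k + 3 - p) = k + 3 := by omega
      rw [hpq]
      ring
    · intro p hp
      simp only [Finset.mem_Icc] at hp
      simp only [Finset.mem_range]
      omega
    · intro p hp hp2
      simp only [Finset.mem_range] at hp
      simp only [Finset.mem_Icc, not_and_or, not_le] at hp2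
      rcases hp2 with h | h
      · interval_cases p
        simp [ha_def]
      · have : k + 3 - p = 0 := by omega
        rw [this]
        simp [ha_def]
  have hd0 : d 0 = 0 := by simp [hd_def, ha_def]
  have hd1 : d 1 = 0 := by
    simp only [hd_def]
    rw [Finset.Nat.sum_antidiagonal_eq_sum_range_succ_mk,
      Finset.sum_range_succ, Finset.sum_range_succ, Finset.sum_range_zero]
    simp [ha_def]
  have hd2 : d 2 = t ^ 2 := by
    simp only [hd_def]
    rw [Finset.Nat.sum_antidiagonal_eq_sum_range_succ_mk,
      Finset.sum_range_succ, Finset.sum_range_succ, Finset.sum_range_succ, Finset.sum_range_zero]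
    simp [ha_def]
    ring
  -- shifted sums
  have hdshift : HasSum (fun k => d (k + 3)) ((Real.log x) ^ 2 - t ^ 2) := by
    have hs : ∑ i ∈ Finset.range 3, d i = t ^ 2 := by
      rw [Finset.sum_range_succ, Finset.sum_range_succ, Finset.sum_range_succ,
        Finset.sum_range_zero, hd0, hd1, hd2]; ring
    have := (hasSum_nat_add_iff' (f := d) 3).mpr hd
    rwa [hs] at this
  have hbshift : HasSum (fun k : ℕ => t ^ (k + 3) / ((k : ℝ) + 3))
      (-Real.log x - t - t ^ 2 / 2) := by
    have hs : ∑ i ∈ Finset.range 2, t ^ (i + 1) / ((i : ℝ) + 1) = t + t ^ 2 / 2 := by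
      rw [Finset.sum_range_succ, Finset.sum_range_succ, Finset.sum_range_zero]
      norm_num
    have h4 := (hasSum_nat_add_iff' (f := fun n : ℕ => t ^ (n + 1) / ((n : ℝ) + 1)) 2).mpr hb
    rw [hs] at h4
    have hfun : (fun n : ℕ => t ^ (n + 2 + 1) / ((↑(n + 2) : ℝ) + 1)) =
        fun k : ℕ => t ^ (k + 3) / ((k : ℝ) + 3) := by
      funext k; push_cast; ring_nf
    rw [hfun] at h4
    rw [show (-Real.log x - t - t ^ 2 / 2) = -Real.log x - (t + t ^ 2 / 2) by ring]
    exact h4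
  -- the series h
  set h : ℕ → ℝ := fun k =>
    ((∑ l ∈ Finset.Icc 1 (k + 2), (1 : ℝ) / ((l : ℝ) * ((k + 3 - l : ℕ) : ℝ))) -
      1 / ((k : ℝ) + 3)) * (1 - x) ^ (k + 1) with hh_def
  have hkey : ∀ k, t ^ 2 * h k = d (k + 3) - t ^ (k + 3) / ((k : ℝ) + 3) := by
    intro k
    rw [hh_def, hd3 k]
    have : (1 - x) = t := rfl
    rw [this]
    ring
  set A : ℝ := (x ^ 2 - 1) / 2 - Real.log x with hA_def
  have hth : HasSum (fun k => t ^ 2 * h k) ((Real.log x) ^ 2 - A) := by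
    have := hdshift.sub hbshift
    have heq : (fun k => d (k + 3) - t ^ (k + 3) / ((k : ℝ) + 3)) = fun k => t ^ 2 * h k := by
      funext k; rw [hkey k]
    rw [heq] at this
    rw [show (Real.log x) ^ 2 - A = (Real.log x) ^ 2 - t ^ 2 - (-Real.log x - t - t ^ 2 / 2) by
      rw [hA_def, ht_def]; ring]
    exact this
  have ht2ne : (t ^ 2 : ℝ) ≠ 0 := by positivity
  have hh : HasSum h (((Real.log x) ^ 2 - A) / t ^ 2) := by
    have := hth.mul_left (t ^ 2)⁻¹
    simp only [← mul_assoc, inv_mul_cancel₀ ht2ne, one_mul] at this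
    rw [div_eq_inv_mul]
    exact this
  -- nonnegativity of each term
  have hhnonneg : ∀ k, 0 ≤ h k := by
    intro k
    rw [hh_def]
    apply mul_nonneg
    · have hmem : (1 : ℕ) ∈ Finset.Icc 1 (k + 2) := by simp
      have hsum_ge := Finset.single_le_sum
        (f := fun l : ℕ => (1 : ℝ) / ((l : ℝ) * ((k + 3 - l : ℕ) : ℝ)))
        (fun l _ => by positivity) hmem
      have h0 : k + 3 - 1 = k + 2 := by omega
      rw [h0] at hsum_ge
      have h1 : ((1 : ℕ) : ℝ) * ((k + 2 : ℕ) : ℝ) = (k : ℝ) + 2 := by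
        push_cast; ring
      rw [h1] at hsum_ge
      have h2 : (1 : ℝ) / ((k : ℝ) + 3) ≤ 1 / ((k : ℝ) + 2) := by
        apply div_le_div_of_nonneg_left one_pos.le (by positivity) (by linarith)
      linarith
    · have : (1 : ℝ) - x = t := rfl
      rw [this]
      positivity
  have hgnonneg : 0 ≤ ((Real.log x) ^ 2 - A) / t ^ 2 := by
    rw [← hh.tsum_eq]
    exact tsum_nonneg hhnonneg
  -- A ≥ t^2
  have hA_ge : t ^ 2 ≤ A := by
    have htail : 0 ≤ -Real.log x - t - t ^ 2 / 2 := by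
      rw [← hbshift.tsum_eq]
      apply tsum_nonneg
      intro k
      positivity
    have hx2 : x ^ 2 = 1 - 2 * t + t ^ 2 := by rw [ht_def]; ring
    rw [hA_def, hx2]
    linarith
  -- conclude
  have htsum : (∑' k, h k) = ((Real.log x) ^ 2 - A) / t ^ 2 := hh.tsum_eq
  show (Real.log x) ^ 2 ≤ A * (1 + ∑' k, h k)
  rw [htsum]
  have hLG : (Real.log x) ^ 2 = A + t ^ 2 * (((Real.log x) ^ 2 - A) / t ^ 2) := by
    field_simp
    ring
  nlinarith [mul_nonneg (sub_nonneg.mpr hA_ge) hgnonneg]
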